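/- (Bipartite extension lemma underlying the bipartite algorithm of Section 4.3.) Let G be a finite simple bipartite graph with maximum degree at most Δ, let φ be a proper partial edge coloring of G with color set {1, …, Δ}, and let uv be an uncolored edge. Then there exists a proper partial edge coloring φ' of G with the same color set {1, …, Δ} whose set of colored edges is exactly the set of colored edges of φ together with uv. -/

import Mathlib

/-- A proper partial edge coloring of `G` with color set `C`. -/
def IsProperPartialEC {V : Type*} (G : SimpleGraph V) (C : Set ℕ)
    (φ : Sym2 V → Option ℕ) : Prop :=
  (∀ e : Sym2 V, φ e ≠ none → e ∈ G.edgeSet) ∧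
  (∀ (e : Sym2 V) (c : ℕ), φ e = some c → c ∈ C) ∧
  (∀ e₁ e₂ : Sym2 V, e₁ ≠ e₂ → (∃ x : V, x ∈ e₁ ∧ x ∈ e₂) →
    ∀ c : ℕ, φ e₁ = some c → φ e₂ ≠ some c)

section Aux

variable {V : Type*} {G : SimpleGraph V} {C : Set ℕ} {φ : Sym2 V → Option ℕ}

lemma ppec_adj (hφ : IsProperPartialEC G C φ) {a b : V} {c : ℕ}
    (h : φ s(a, b) = some c) : G.Adj a b :=
  (SimpleGraph.mem_edgeSet G).mp (hφ.1 _ (by simp [h]))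

/-- Two same-colored edges sharing the vertex `a` coincide. -/
lemma ppec_same_color (hφ : IsProperPartialEC G C φ) {a b d : V} {c : ℕ}
    (h1 : φ s(a, b) = some c) (h2 : φ s(a, d) = some c) : b = d := by
  by_contra hbd
  have hne : s(a, b) ≠ s(a, d) := fun h => hbd (Sym2.congr_right.mp h)
  exact hφ.2.2 _ _ hne ⟨a, by simp, by simp⟩ c h1 h2

/-- Alternating α/β chains starting at `v` with first edge colored `α`.
`AltChain φ α β v x c` means `x` is reachable and the edge entering `x` is colored `c`. -/
inductive AltChain (φ : Sym2 V → Option ℕ) (α β : ℕ) (v : V) : V → ℕ → Prop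
  | base : ∀ y, φ s(v, y) = some α → AltChain φ α β v y α
  | stepA : ∀ x y, AltChain φ α β v x β → φ s(x, y) = some α → AltChain φ α β v y α
  | stepB : ∀ x y, AltChain φ α β v x α → φ s(x, y) = some β → AltChain φ α β v y β

/-- Vertices of the Kempe component of `v`. -/
def InComp (φ : Sym2 V → Option ℕ) (α β : ℕ) (v : V) (x : V) : Prop :=
  x = v ∨ ∃ c, AltChain φ α β v x c

lemma altChain_parity (hφ : IsProperPartialEC G C φ) {α β : ℕ} {v : V}
    (f : V → Bool) (hbip : ∀ a b : V, G.Adj a b → f a ≠ f b) (hαβ : α ≠ β) :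
    ∀ x c, AltChain φ α β v x c → (c = α ∧ f x ≠ f v) ∨ (c = β ∧ f x = f v) := by
  intro x c h
  induction h with
  | base y hy =>
      exact Or.inl ⟨rfl, (hbip v y (ppec_adj hφ hy)).symm⟩
  | stepA x y hx he ih =>
      rcases ih with ⟨hc, _⟩ | ⟨_, hfx⟩
      · exact absurd hc.symm hαβ
      · have hxy := hbip x y (ppec_adj hφ he)
        refine Or.inl ⟨rfl, ?_⟩
        cases hfv : f v <;> cases hfy : f y <;> simp_all
  | stepB x y hx he ih =>
      rcases ih with ⟨_, hfx⟩ | ⟨hc, _⟩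
      · have hxy := hbip x y (ppec_adj hφ he)
        refine Or.inr ⟨rfl, ?_⟩
        cases hfv : f v <;> cases hfy : f y <;> cases hfx' : f x <;> simp_all
      · exact absurd hc hαβ

/-- The Kempe component is closed under α/β-colored edges. -/
lemma altChain_closed (hφ : IsProperPartialEC G C φ) {α β : ℕ} {v : V} (hαβ : α ≠ β) :
    ∀ x c, AltChain φ α β v x c → ∀ y,
      (φ s(x, y) = some α ∨ φ s(x, y) = some β) → InComp φ α β v y := by
  intro x c h
  induction h with
  | base y₀ h0 =>
      intro y hy
      rcases hy with hα | hβ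
      · -- edges s(y₀,v) and s(y₀,y) both colored α
        have : v = y := ppec_same_color hφ (Sym2.eq_swap ▸ h0) hα
        exact Or.inl this.symm
      · exact Or.inr ⟨β, AltChain.stepB y₀ y (AltChain.base y₀ h0) hβ⟩
  | stepA x y hx he ih =>
      intro z hz
      rcases hz with hα | hβ
      · have : x = z := ppec_same_color hφ (Sym2.eq_swap ▸ he) hα
        exact this ▸ Or.inr ⟨β, hx⟩
      · exact Or.inr ⟨β, AltChain.stepB y z (AltChain.stepA x y hx he) hβ⟩
  | stepB x y hx he ih =>
      intro z hz
      rcases hz with hα | hβ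
      · exact Or.inr ⟨α, AltChain.stepA y z (AltChain.stepB x y hx he) hα⟩
      · have : x = z := ppec_same_color hφ (Sym2.eq_swap ▸ he) hβ
        exact this ▸ Or.inr ⟨α, hx⟩

lemma comp_closed (hφ : IsProperPartialEC G C φ) {α β : ℕ} {v : V} (hαβ : α ≠ β)
    (hmv : ∀ w, φ s(v, w) ≠ some β) :
    ∀ x, InComp φ α β v x → ∀ y,
      (φ s(x, y) = some α ∨ φ s(x, y) = some β) → InComp φ α β v y := by
  rintro x (rfl | ⟨c, hch⟩) y hy
  · rcases hy with hα | hβ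
    · exact Or.inr ⟨α, AltChain.base y hα⟩
    · exact absurd hβ (hmv y)
  · exact altChain_closed hφ hαβ x c hch y hy

/-- Existence of a missing color at the endpoint of an uncolored edge. -/
lemma exists_missing {V : Type*} [Fintype V] [DecidableEq V]
    (G : SimpleGraph V) [DecidableRel G.Adj] (Δ : ℕ) (hΔ : ∀ w : V, G.degree w ≤ Δ)
    (φ : Sym2 V → Option ℕ) (hφ : IsProperPartialEC G (Set.Icc 1 Δ) φ)
    (u v : V) (huv : G.Adj u v) (hun : φ s(u, v) = none) :
    ∃ α ∈ Set.Icc 1 Δ, ∀ w, φ s(u, w) ≠ some α := by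
  classical
  by_contra hcon
  push_neg at hcon
  have key : ∀ c ∈ Finset.Icc 1 Δ, ∃ w, φ s(u, w) = some c := by
    intro c hc
    exact hcon c (by simpa using hc)
  set F : ℕ → V := fun c => if hc : ∃ w, φ s(u, w) = some c then hc.choose else u with hF
  have hFspec : ∀ c ∈ Finset.Icc 1 Δ, φ s(u, F c) = some c := by
    intro c hc
    have hex := key c hc
    simp only [hF, dif_pos hex]
    exact hex.choose_spec
  have hvmem : v ∈ G.neighborFinset u := (G.mem_neighborFinset u v).mpr huv
  have hmaps : ∀ c ∈ Finset.Icc 1 Δ, F c ∈ (G.neighborFinset u).erase v := by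
    intro c hc
    have hs := hFspec c hc
    refine Finset.mem_erase.mpr ⟨?_, ?_⟩
    · rintro rfl; rw [hun] at hs; exact (Option.some_ne_none _ hs.symm).elim
    · exact (G.mem_neighborFinset u _).mpr (ppec_adj hφ hs)
  have hinj : Set.InjOn F (Finset.Icc 1 Δ : Finset ℕ) := by
    intro c1 h1 c2 h2 heq
    have hs1 := hFspec c1 h1
    have hs2 := hFspec c2 h2
    rw [heq, hs2] at hs1
    exact (Option.some.inj hs1).symm
  have hcard := Finset.card_le_card_of_injOn F hmaps hinj
  rw [Finset.card_erase_of_mem hvmem, Nat.card_Icc] at hcard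
  have hdeg : G.degree u ≤ Δ := hΔ u
  have hpos : 0 < G.degree u := Finset.card_pos.mpr ⟨v, hvmem⟩
  have : (G.neighborFinset u).card = G.degree u := rfl
  omega

end Aux

/-- **Bipartite extension lemma.** If `G` is bipartite with maximum degree at most
`Δ`, any proper partial edge coloring with color set `{1, …, Δ}` can be modified so
that one additional prescribed uncolored edge becomes colored, while the set of
colored edges otherwise stays the same. -/
theorem bipartite_extend_partial_coloring {V : Type*} [Fintype V] [DecidableEq V]
    (G : SimpleGraph V) [DecidableRel G.Adj]
    (f : V → Bool) (hbip : ∀ a b : V, G.Adj a b → f a ≠ f b)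
    (Δ : ℕ) (hΔ : ∀ v : V, G.degree v ≤ Δ)
    (φ : Sym2 V → Option ℕ)
    (hφ : IsProperPartialEC G (Set.Icc 1 Δ) φ)
    (u v : V) (huv : G.Adj u v) (hun : φ s(u, v) = none) :
    ∃ φ' : Sym2 V → Option ℕ,
      IsProperPartialEC G (Set.Icc 1 Δ) φ' ∧
      {e : Sym2 V | φ' e ≠ none} = insert s(u, v) {e : Sym2 V | φ e ≠ none} := by
  classical
  obtain ⟨α, hαI, hmu⟩ := exists_missing G Δ hΔ φ hφ u v huv hun
  obtain ⟨β, hβI, hmv⟩ := exists_missing G Δ hΔ φ hφ v u huv.symm (Sym2.eq_swap ▸ hun)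
  -- Step 1: produce ψ, proper, same domain as φ, with α missing at both u and v.
  obtain ⟨ψ, hψ, hdom, hψu, hψv⟩ :
      ∃ ψ : Sym2 V → Option ℕ, IsProperPartialEC G (Set.Icc 1 Δ) ψ ∧
        (∀ e, ψ e = none ↔ φ e = none) ∧
        (∀ w, ψ s(u, w) ≠ some α) ∧ (∀ w, ψ s(v, w) ≠ some α) := by
    by_cases hαβ : α = β
    · exact ⟨φ, hφ, fun e => Iff.rfl, hmu, fun w => hαβ ▸ hmv w⟩
    · -- Kempe chain swap
      set Comp := InComp φ α β v with hComp
      have hclosed := comp_closed hφ hαβ hmv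
      have hunotin : ¬ Comp u := by
        rintro (rfl | ⟨c, hch⟩)
        · exact G.irrefl huv
        · cases hch with
          | base y h0 => exact hmu v (Sym2.eq_swap ▸ h0)
          | stepA x y hx he => exact hmu x (Sym2.eq_swap ▸ he)
          | stepB x y hx he =>
              have := altChain_parity hφ f hbip hαβ u β (AltChain.stepB x u hx he)
              rcases this with ⟨hc, _⟩ | ⟨_, hfu⟩
              · exact hαβ hc.symm
              · exact hbip u v huv hfu
      set ψ : Sym2 V → Option ℕ := fun e =>
        (φ e).map fun c =>
          if (c = α ∨ c = β) ∧ ∃ x ∈ e, Comp x then (if c = α then β else α) else c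
        with hψdef
      have hψeq : ∀ e c, φ e = some c →
          ψ e = some (if (c = α ∨ c = β) ∧ ∃ x ∈ e, Comp x then (if c = α then β else α) else c) := by
        intro e c h; simp [hψdef, h]
      have hψnone : ∀ e, ψ e = none ↔ φ e = none := by
        intro e; simp [hψdef]
      -- the swapped edges have both endpoints in Comp
      have hboth : ∀ (a b : V) (c : ℕ), φ s(a, b) = some c → (c = α ∨ c = β) →
          Comp a → Comp b := by
        intro a b c h hc ha
        refine hclosed a ha b ?_
        rcases hc with rfl | rfl
        · exact Or.inl h
        · exact Or.inr h
      have htouch : ∀ (e : Sym2 V) (c : ℕ), φ e = some c → (c = α ∨ c = β) →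
          (∃ x ∈ e, Comp x) → ∀ x ∈ e, Comp x := by
        intro e c h hc hex
        induction e using Sym2.inductionOn with
        | hf a b =>
          obtain ⟨x, hx, hxc⟩ := hex
          rcases Sym2.mem_iff.mp hx with rfl | rfl
          · intro y hy
            rcases Sym2.mem_iff.mp hy with rfl | rfl
            · exact hxc
            · exact hboth _ _ _ h hc hxc
          · intro y hy
            rcases Sym2.mem_iff.mp hy with rfl | rfl
            · exact hboth _ _ _ (Sym2.eq_swap ▸ h) hc hxc
            · exact hxc
      refine ⟨ψ, ⟨?_, ?_, ?_⟩, hψnone, ?_, ?_⟩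
      · intro e he
        exact hφ.1 e (fun hn => he ((hψnone e).mpr hn))
      · intro e c h
        rcases he : φ e with _ | c'
        · rw [(hψnone e).mpr he] at h
          exact (Option.some_ne_none _ h.symm).elim
        · have := hψeq e c' he
          rw [this] at h
          have hc := Option.some.inj h
          have hc'I := hφ.2.1 e c' he
          subst hc
          split
          · split
            · exact hβI
            · exact hαI
          · exact hc'I
      · -- properness
        intro e₁ e₂ hne hshare c h1 h2
        obtain ⟨x, hx1, hx2⟩ := hshare
        rcases he1 : φ e₁ with _ | c₁
        · rw [(hψnone e₁).mpr he1] at h1; exact (Option.some_ne_none _ h1.symm).elim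
        rcases he2 : φ e₂ with _ | c₂
        · rw [(hψnone e₂).mpr he2] at h2; exact (Option.some_ne_none _ h2.symm).elim
        have hc12 : c₁ ≠ c₂ := by
          intro h; exact hφ.2.2 e₁ e₂ hne ⟨x, hx1, hx2⟩ c₁ he1 (h ▸ he2)
        rw [hψeq e₁ c₁ he1] at h1
        rw [hψeq e₂ c₂ he2] at h2
        have h12 := (Option.some.inj h1).trans (Option.some.inj h2).symm
        by_cases hs1 : (c₁ = α ∨ c₁ = β) ∧ ∃ y ∈ e₁, Comp y
        · by_cases hs2 : (c₂ = α ∨ c₂ = β) ∧ ∃ y ∈ e₂, Comp y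
          · rw [if_pos hs1, if_pos hs2] at h12
            rcases hs1.1 with rfl | rfl <;> rcases hs2.1 with rfl | rfl <;>
              simp_all
          · -- e₁ swapped, e₂ not: show e₂ should have been swapped or colors differ
            rw [if_pos hs1, if_neg hs2] at h12
            have hxc : Comp x := htouch e₁ c₁ he1 hs1.1 hs1.2 x hx1
            rcases hs1.1 with rfl | rfl
            · rw [if_pos rfl] at h12
              exact hs2 ⟨Or.inr h12.symm, x, hx2, hxc⟩
            · rw [if_neg (Ne.symm hαβ)] at h12
              exact hs2 ⟨Or.inl h12.symm, x, hx2, hxc⟩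
        · by_cases hs2 : (c₂ = α ∨ c₂ = β) ∧ ∃ y ∈ e₂, Comp y
          · rw [if_neg hs1, if_pos hs2] at h12
            have hxc : Comp x := htouch e₂ c₂ he2 hs2.1 hs2.2 x hx2
            rcases hs2.1 with rfl | rfl
            · rw [if_pos rfl] at h12
              exact hs1 ⟨Or.inr h12, x, hx1, hxc⟩
            · rw [if_neg (Ne.symm hαβ)] at h12
              exact hs1 ⟨Or.inl h12, x, hx1, hxc⟩
          · rw [if_neg hs1, if_neg hs2] at h12
            exact hc12 h12
      · -- α missing at u under ψ
        intro w hw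
        rcases he : φ s(u, w) with _ | c
        · rw [(hψnone _).mpr he] at hw; exact (Option.some_ne_none _ hw.symm).elim
        rw [hψeq _ c he] at hw
        have hc := Option.some.inj hw
        by_cases hs : (c = α ∨ c = β) ∧ ∃ y ∈ s(u, w), Comp y
        · rw [if_pos hs] at hc
          have hcβ : c = β := by
            rcases hs.1 with rfl | rfl
            · rw [if_pos rfl] at hc; exact absurd hc.symm hαβ
            · rfl
          subst hcβ
          have : Comp u := htouch _ _ he hs.1 hs.2 u (by simp)
          exact hunotin this
        · rw [if_neg hs] at hc
          exact hmu w (hc ▸ he)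
      · -- α missing at v under ψ
        intro w hw
        rcases he : φ s(v, w) with _ | c
        · rw [(hψnone _).mpr he] at hw; exact (Option.some_ne_none _ hw.symm).elim
        rw [hψeq _ c he] at hw
        have hc := Option.some.inj hw
        by_cases hs : (c = α ∨ c = β) ∧ ∃ y ∈ s(v, w), Comp y
        · rw [if_pos hs] at hc
          rcases hs.1 with rfl | rfl
          · rw [if_pos rfl] at hc; exact hαβ hc.symm
          · exact hmv w he
        · rw [if_neg hs] at hc
          exact hs ⟨Or.inl hc, v, by simp, Or.inl rfl⟩
  -- Step 2: extend ψ by coloring s(u,v) with α.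
  have hψuv : ψ s(u, v) = none := (hdom _).mpr hun
  refine ⟨Function.update ψ s(u, v) (some α), ⟨?_, ?_, ?_⟩, ?_⟩
  · intro e he
    by_cases h : e = s(u, v)
    · subst h; exact (SimpleGraph.mem_edgeSet G).mpr huv
    · rw [Function.update_of_ne h] at he
      exact hψ.1 e he
  · intro e c h
    by_cases he : e = s(u, v)
    · subst he
      rw [Function.update_self] at h
      exact (Option.some.inj h) ▸ hαI
    · rw [Function.update_of_ne he] at h
      exact hψ.2.1 e c h
  · intro e₁ e₂ hne hshare c h1 h2
    obtain ⟨x, hx1, hx2⟩ := hshare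
    by_cases he1 : e₁ = s(u, v)
    · subst he1
      rw [Function.update_self] at h1
      have hcα : c = α := (Option.some.inj h1).symm
      subst hcα
      have he2 : e₂ ≠ s(u, v) := fun h => hne h.symm
      rw [Function.update_of_ne he2] at h2
      obtain ⟨w, rfl⟩ := Sym2.mem_iff_exists.mp hx2
      rcases Sym2.mem_iff.mp hx1 with rfl | rfl
      · exact hψu w h2
      · exact hψv w h2
    · rw [Function.update_of_ne he1] at h1
      by_cases he2 : e₂ = s(u, v)
      · subst he2
        rw [Function.update_self] at h2
        have hcα : c = α := (Option.some.inj h2).symm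
        subst hcα
        obtain ⟨w, rfl⟩ := Sym2.mem_iff_exists.mp hx1
        rcases Sym2.mem_iff.mp hx2 with rfl | rfl
        · exact hψu w h1
        · exact hψv w h1
      · rw [Function.update_of_ne he2] at h2
        exact hψ.2.2 e₁ e₂ hne ⟨x, hx1, hx2⟩ c h1 h2
  · ext e
    simp only [Set.mem_setOf_eq, Set.mem_insert_iff]
    by_cases he : e = s(u, v)
    · subst he
      simp [Function.update_self]
    · rw [Function.update_of_ne he]
      constructor
      · intro h; exact Or.inr (fun hn => h ((hdom e).mpr hn))
      · rintro (h | h)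
        · exact absurd h he
        · exact fun hn => h ((hdom e).mp hn)
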